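/- Let ω > 1 and set ρ₀ = arcsinh(1/√(ω² − 1)). Then ∫₀^{ρ₀} cosh²ρ · (1 − (ω² − 1) sinh²ρ)^{−1/2} dρ = (ω/(ω² − 1)) · E(1/ω²). (This evaluates the conserved energy of the folded closed GKP string/stringy membrane in terms of a complete elliptic integral.) -/

import Mathlib

noncomputable section

open Real

/-- Complete elliptic integral of the first kind,
K(m) = ∫₀^{π/2} (1 − m sin²θ)^{−1/2} dθ. -/
def ellK (m : ℝ) : ℝ := ∫ θ in (0:ℝ)..(π / 2), (Real.sqrt (1 - m * Real.sin θ ^ 2))⁻¹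

/-- Complete elliptic integral of the second kind,
E(m) = ∫₀^{π/2} (1 − m sin²θ)^{1/2} dθ. -/
def ellE (m : ℝ) : ℝ := ∫ θ in (0:ℝ)..(π / 2), Real.sqrt (1 - m * Real.sin θ ^ 2)

open MeasureTheory Set in
/-- The conserved energy integral of the folded closed GKP string/stringy
membrane evaluates to a complete elliptic integral of the second kind. -/
theorem gkp_energy_integral (ω : ℝ) (hω : 1 < ω) (ρ₀ : ℝ)
    (hρ₀ : ρ₀ = Real.arsinh (1 / Real.sqrt (ω ^ 2 - 1))) :
    ∫ ρ in (0:ℝ)..ρ₀,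
        Real.cosh ρ ^ 2 * (Real.sqrt (1 - (ω ^ 2 - 1) * Real.sinh ρ ^ 2))⁻¹
      = (ω / (ω ^ 2 - 1)) * ellE (1 / ω ^ 2) := by
  rw [ellE]
  have h1 : (0:ℝ) < ω ^ 2 - 1 := by nlinarith
  have hωpos : (0:ℝ) < ω := by linarith
  set c := Real.sqrt (ω ^ 2 - 1) with hcdef
  have hcpos : 0 < c := Real.sqrt_pos.mpr h1
  have hc2 : c ^ 2 = ω ^ 2 - 1 := Real.sq_sqrt h1.le
  set g : ℝ → ℝ := fun θ => Real.arsinh (Real.sin θ / c) with hgdef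
  set g' : ℝ → ℝ := fun θ =>
      (Real.sqrt (1 + (Real.sin θ / c) ^ 2))⁻¹ * (Real.cos θ / c) with hg'def
  have hderiv : ∀ θ : ℝ, HasDerivAt g (g' θ) θ := by
    intro θ
    exact (Real.hasDerivAt_arsinh _).comp θ ((Real.hasDerivAt_sin θ).div_const c)
  have hg0 : g 0 = 0 := by simp [hgdef]
  have hgtop : g (π / 2) = ρ₀ := by simp [hgdef, hρ₀, one_div]
  have hmono : StrictMonoOn g (Icc 0 (π / 2)) := by
    intro x hx y hy hxy
    have hsin : Real.sin x < Real.sin y := by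
      apply Real.strictMonoOn_sin ⟨by linarith [hx.1, pi_pos], hx.2⟩
        ⟨by linarith [hy.1, pi_pos], hy.2⟩ hxy
    exact Real.arsinh_lt_arsinh.mpr (by gcongr)
  have hρpos : 0 < ρ₀ := by
    rw [hρ₀]; exact Real.arsinh_pos_iff.mpr (by positivity)
  have hcont : Continuous g := Real.continuous_arsinh.comp (Real.continuous_sin.div_const c)
  have himg : g '' Ioo 0 (π / 2) = Ioo 0 ρ₀ := by
    apply Subset.antisymm
    · rintro _ ⟨θ, hθ, rfl⟩
      constructor
      · rw [← hg0]
        exact hmono ⟨le_refl 0, by linarith [pi_pos]⟩ ⟨hθ.1.le, hθ.2.le⟩ hθ.1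
      · rw [← hgtop]
        exact hmono ⟨hθ.1.le, hθ.2.le⟩ ⟨by linarith [pi_pos], le_refl _⟩ hθ.2
    · have := intermediate_value_Ioo (a := (0:ℝ)) (b := π/2) (by linarith [pi_pos])
        hcont.continuousOn (f := g)
      rwa [hg0, hgtop] at this
  have hinj : InjOn g (Ioo 0 (π / 2)) :=
    (hmono.injOn).mono Ioo_subset_Icc_self
  -- change of variables
  have key : ∀ θ ∈ Ioo (0:ℝ) (π/2),
      |g' θ| • (Real.cosh (g θ) ^ 2 * (Real.sqrt (1 - (ω ^ 2 - 1) * Real.sinh (g θ) ^ 2))⁻¹)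
        = (ω / (ω ^ 2 - 1)) * Real.sqrt (1 - (1/ω^2) * Real.cos θ ^ 2) := by
    intro θ hθ
    have hcos : 0 < Real.cos θ := Real.cos_pos_of_mem_Ioo ⟨by linarith [hθ.1, pi_pos], hθ.2⟩
    have hs : 0 < Real.sin θ := Real.sin_pos_of_pos_of_lt_pi hθ.1 (by linarith [hθ.2, pi_pos])
    set D := Real.sqrt (c ^ 2 + Real.sin θ ^ 2) with hDdef
    have hDpos : 0 < D := Real.sqrt_pos.mpr (by positivity)
    have hD2 : D ^ 2 = c ^ 2 + Real.sin θ ^ 2 := Real.sq_sqrt (by positivity)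
    have e1 : 1 - (ω ^ 2 - 1) * (Real.sin θ / c) ^ 2 = Real.cos θ ^ 2 := by
      rw [div_pow]
      field_simp
      nlinarith [Real.sin_sq_add_cos_sq θ, hc2]
    have e2 : 1 + (Real.sin θ / c) ^ 2 = (c ^ 2 + Real.sin θ ^ 2) / c ^ 2 := by
      field_simp
    have e3 : Real.sqrt ((c ^ 2 + Real.sin θ ^ 2) / c ^ 2) = D / c := by
      rw [Real.sqrt_div (by positivity), Real.sqrt_sq hcpos.le]
    have e4 : 1 - (1/ω^2) * Real.cos θ ^ 2 = (c ^ 2 + Real.sin θ ^ 2) / ω ^ 2 := by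
      field_simp
      nlinarith [Real.sin_sq_add_cos_sq θ, hc2]
    have e5 : Real.sqrt ((c ^ 2 + Real.sin θ ^ 2) / ω ^ 2) = D / ω := by
      rw [Real.sqrt_div (by positivity), Real.sqrt_sq hωpos.le]
    simp only [hgdef, hg'def, Real.sinh_arsinh, Real.cosh_arsinh, smul_eq_mul]
    rw [e1, Real.sqrt_sq hcos.le, e2, e3]
    rw [e4, e5]
    rw [abs_of_pos (by positivity)]
    rw [← hc2]
    field_simp
  calc ∫ ρ in (0:ℝ)..ρ₀,
        Real.cosh ρ ^ 2 * (Real.sqrt (1 - (ω ^ 2 - 1) * Real.sinh ρ ^ 2))⁻¹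
      = ∫ ρ in Ioo (0:ℝ) ρ₀,
        Real.cosh ρ ^ 2 * (Real.sqrt (1 - (ω ^ 2 - 1) * Real.sinh ρ ^ 2))⁻¹ := by
        rw [intervalIntegral.integral_of_le hρpos.le, MeasureTheory.integral_Ioc_eq_integral_Ioo]
    _ = ∫ θ in Ioo (0:ℝ) (π/2),
        |g' θ| • (Real.cosh (g θ) ^ 2 * (Real.sqrt (1 - (ω ^ 2 - 1) * Real.sinh (g θ) ^ 2))⁻¹) := by
        rw [← himg]
        exact integral_image_eq_integral_abs_deriv_smul measurableSet_Ioo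
          (fun x _ => (hderiv x).hasDerivWithinAt) hinj _
    _ = ∫ θ in Ioo (0:ℝ) (π/2),
        (ω / (ω ^ 2 - 1)) * Real.sqrt (1 - (1/ω^2) * Real.cos θ ^ 2) := by
        exact MeasureTheory.setIntegral_congr_fun measurableSet_Ioo key
    _ = (ω / (ω ^ 2 - 1)) * ∫ θ in (0:ℝ)..(π / 2),
        Real.sqrt (1 - (1/ω^2) * Real.cos θ ^ 2) := by
        rw [MeasureTheory.integral_const_mul,
          intervalIntegral.integral_of_le (by positivity : (0:ℝ) ≤ π/2),
          MeasureTheory.integral_Ioc_eq_integral_Ioo]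
    _ = (ω / (ω ^ 2 - 1)) * ∫ θ in (0:ℝ)..(π / 2),
        Real.sqrt (1 - (1/ω^2) * Real.sin θ ^ 2) := by
        congr 1
        have : ∀ x : ℝ, Real.sqrt (1 - (1/ω^2) * Real.cos x ^ 2)
            = (fun y => Real.sqrt (1 - (1/ω^2) * Real.sin y ^ 2)) (π/2 - x) := by
          intro x; simp [Real.sin_pi_div_two_sub]
        simp_rw [this]
        rw [intervalIntegral.integral_comp_sub_left
          (fun y => Real.sqrt (1 - (1/ω^2) * Real.sin y ^ 2)) (π/2)]
        norm_num
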